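/- Suppose {M_i^l}_{i=1}^{n_l} (l = 1,…,L) are LOCC measurements and H is a Hermitian operator such that H − η_cρ_c is block positive and Tr[M_c(H − η_cρ_c)] = 0 for all c ∈ N_n, where M_c = ⊗_l M_{c_l}^l. Then Π_l p_L(E^l) = p_L(⊗_l E^l) = p_SEP(⊗_l E^l). -/

import Mathlib

open Matrix BigOperators ComplexOrder

noncomputable section

/-- Tensor product of a family of local operators, one per party/step. -/
def tensorFam {m : ℕ} {ι : Fin m → Type*} [∀ k, Fintype (ι k)]
    (A : (k : Fin m) → Matrix (ι k) (ι k) ℂ) :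
    Matrix ((k : Fin m) → ι k) ((k : Fin m) → ι k) ℂ :=
  Matrix.of fun i j => ∏ k, A k (i k) (j k)

/-- Separable operator: a sum of tensor products of positive semidefinite local operators. -/
def IsSep {m : ℕ} {ι : Fin m → Type*} [∀ k, Fintype (ι k)]
    (E : Matrix ((k : Fin m) → ι k) ((k : Fin m) → ι k) ℂ) : Prop :=
  ∃ (S : Finset ℕ) (A : ℕ → (k : Fin m) → Matrix (ι k) (ι k) ℂ),
    (∀ s ∈ S, ∀ k, (A s k).PosSemidef) ∧ E = ∑ s ∈ S, tensorFam (A s)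

/-- Separable state: separable with trace one. -/
def IsSepState {m : ℕ} {ι : Fin m → Type*} [∀ k, Fintype (ι k)]
    (σ : Matrix ((k : Fin m) → ι k) ((k : Fin m) → ι k) ℂ) : Prop :=
  IsSep σ ∧ σ.trace = 1

/-- Block positive: nonnegative mean value on every separable state. -/
def IsBlockPos {m : ℕ} {ι : Fin m → Type*} [∀ k, Fintype (ι k)]
    (E : Matrix ((k : Fin m) → ι k) ((k : Fin m) → ι k) ℂ) : Prop :=
  ∀ σ, IsSepState σ → 0 ≤ ((E * σ).trace).re

def IsPOVM {α N : Type*} [Fintype α] [Fintype N] [DecidableEq N]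
    (M : α → Matrix N N ℂ) : Prop :=
  (∀ i, (M i).PosSemidef) ∧ ∑ i, M i = 1

/-- Average success probability of a guessing strategy. -/
def succProb {α N : Type*} [Fintype α] [Fintype N]
    (η : α → ℝ) (ρ M : α → Matrix N N ℂ) : ℝ :=
  ∑ i, η i * ((ρ i * M i).trace).re
/-- Tensor product over the sequence steps, with indices grouped by party:
party k holds its parts of all L systems. -/
def stepTensor {L m : ℕ} {ι : Fin L → Fin m → Type*} [∀ l k, Fintype (ι l k)]
    (A : (l : Fin L) → Matrix ((k : Fin m) → ι l k) ((k : Fin m) → ι l k) ℂ) :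
    Matrix ((k : Fin m) → (l : Fin L) → ι l k) ((k : Fin m) → (l : Fin L) → ι l k) ℂ :=
  Matrix.of fun i j => ∏ l, A l (fun k => i k l) (fun k => j k l)


section helpers
variable {α : Type*} [CommSemiring α]

lemma sum_prod_pi {L : ℕ} {κ : Fin L → Type*} [∀ l, Fintype (κ l)]
    (f : (l : Fin L) → κ l → α) :
    ∑ x : (l : Fin L) → κ l, ∏ l, f l (x l) = ∏ l, ∑ y, f l y := by
  classical
  rw [Finset.prod_univ_sum]
  rw [Fintype.piFinset_univ]

lemma sum_prod_grouped {L m : ℕ} {ι : Fin L → Fin m → Type*} [∀ l k, Fintype (ι l k)]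
    (F : (l : Fin L) → ((k : Fin m) → ι l k) → α) :
    ∑ x : (k : Fin m) → (l : Fin L) → ι l k, ∏ l, F l (fun k => x k l)
      = ∏ l, ∑ y : (k : Fin m) → ι l k, F l y := by
  rw [← sum_prod_pi (fun l y => F l y)]
  exact Fintype.sum_equiv (Equiv.piComm fun k l => ι l k) _ _ (fun x => rfl)

end helpers

section psd
variable {N : Type*} [Fintype N]

lemma trace_conjTranspose_mul_self_nonneg (B : Matrix N N ℂ) : 0 ≤ (Bᴴ * B).trace := by
  rw [Matrix.trace]
  refine Finset.sum_nonneg fun i _ => ?_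
  rw [Matrix.diag_apply, Matrix.mul_apply]
  refine Finset.sum_nonneg fun j _ => ?_
  simpa [Matrix.conjTranspose_apply] using star_mul_self_nonneg (B j i)

lemma psd_trace_nonneg [DecidableEq N] {A : Matrix N N ℂ} (h : A.PosSemidef) : 0 ≤ A.trace := by
  obtain ⟨B, rfl⟩ : ∃ B : Matrix N N ℂ, A = Bᴴ * B := by
    open scoped MatrixOrder in exact CStarAlgebra.nonneg_iff_eq_star_mul_self.mp h.nonneg
  exact trace_conjTranspose_mul_self_nonneg B

lemma nonneg_trace_eq {z : ℂ} (h : 0 ≤ z) : z = ((z.re : ℝ) : ℂ) := by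
  obtain ⟨h1, h2⟩ := Complex.nonneg_iff.mp h
  exact Complex.ext rfl (by simp [← h2])

lemma psd_eq_zero_of_trace [DecidableEq N] {A : Matrix N N ℂ}
    (h : A.PosSemidef) (ht : A.trace = 0) : A = 0 := by
  obtain ⟨B, rfl⟩ : ∃ B : Matrix N N ℂ, A = Bᴴ * B := by
    open scoped MatrixOrder in exact CStarAlgebra.nonneg_iff_eq_star_mul_self.mp h.nonneg
  have h1 : (Bᴴ * B).trace = ((∑ i, ∑ j, Complex.normSq (B j i) : ℝ) : ℂ) := by
    push_cast
    rw [Matrix.trace]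
    refine Finset.sum_congr rfl fun i _ => ?_
    rw [Matrix.diag_apply, Matrix.mul_apply]
    refine Finset.sum_congr rfl fun j _ => ?_
    rw [Matrix.conjTranspose_apply, Complex.normSq_eq_conj_mul_self]
    rfl
  rw [h1] at ht
  have h2 : ∑ i, ∑ j, Complex.normSq (B j i) = 0 := by exact_mod_cast ht
  have hB : B = 0 := by
    ext j i
    have := (Finset.sum_eq_zero_iff_of_nonneg (fun i _ =>
      Finset.sum_nonneg fun j _ => Complex.normSq_nonneg _)).mp h2 i (Finset.mem_univ i)
    have := (Finset.sum_eq_zero_iff_of_nonneg (fun j _ => Complex.normSq_nonneg _)).mp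
      this j (Finset.mem_univ j)
    simpa using Complex.normSq_eq_zero.mp this
  rw [hB]; simp

lemma psd_trace_mul_nonneg [DecidableEq N] {A B : Matrix N N ℂ}
    (hA : A.PosSemidef) (hB : B.PosSemidef) : 0 ≤ (A * B).trace := by
  obtain ⟨C, rfl⟩ : ∃ C : Matrix N N ℂ, B = Cᴴ * C := by
    open scoped MatrixOrder in exact CStarAlgebra.nonneg_iff_eq_star_mul_self.mp hB.nonneg
  rw [← Matrix.mul_assoc, Matrix.trace_mul_cycle]
  exact psd_trace_nonneg (hA.mul_mul_conjTranspose_same C)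

lemma psd_smul {A : Matrix N N ℂ} (h : A.PosSemidef) {c : ℝ} (hc : 0 ≤ c) :
    ((c : ℂ) • A).PosSemidef := by
  constructor
  · have h1 := h.1
    unfold Matrix.IsHermitian at *
    rw [Matrix.conjTranspose_smul, h1]
    congr 1
    simp
  · intro x
    have h2 := h.2 x
    have h3 := mul_nonneg (show (0 : ℂ) ≤ (c : ℂ) by exact_mod_cast hc) h2
    simp only [Finsupp.mul_sum] at h3
    convert h3 using 1
    simp only [Matrix.smul_apply, smul_eq_mul]
    exact Finsupp.sum_congr fun i _ => Finsupp.sum_congr fun j _ => by ring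

end psd

section tensor
variable {m : ℕ} {ι : Fin m → Type*} [∀ k, Fintype (ι k)]

lemma tensorFam_trace (A : (k : Fin m) → Matrix (ι k) (ι k) ℂ) :
    (tensorFam A).trace = ∏ k, (A k).trace := by
  rw [Matrix.trace]
  simp only [Matrix.diag_apply, tensorFam, Matrix.of_apply]
  exact sum_prod_pi (fun k y => A k y y)

lemma tensorFam_smul (c : Fin m → ℝ) (A : (k : Fin m) → Matrix (ι k) (ι k) ℂ) :
    tensorFam (fun k => ((c k : ℂ)) • A k) = (((∏ k, c k : ℝ)) : ℂ) • tensorFam A := by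
  ext i j
  simp only [tensorFam, Matrix.of_apply, Matrix.smul_apply, Matrix.of_apply, smul_eq_mul]
  rw [Finset.prod_mul_distrib]
  push_cast
  ring

lemma tensorFam_eq_zero {A : (k : Fin m) → Matrix (ι k) (ι k) ℂ} {k0 : Fin m}
    (h : A k0 = 0) : tensorFam A = 0 := by
  ext i j
  simp only [tensorFam, Matrix.of_apply, Matrix.zero_apply]
  exact Finset.prod_eq_zero (Finset.mem_univ k0) (by simp [h])

variable [∀ k, DecidableEq (ι k)]

lemma blockPos_tensor_nonneg {E : Matrix ((k : Fin m) → ι k) ((k : Fin m) → ι k) ℂ}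
    (hE : IsBlockPos E) {A : (k : Fin m) → Matrix (ι k) (ι k) ℂ}
    (hA : ∀ k, (A k).PosSemidef) : 0 ≤ ((E * tensorFam A).trace).re := by
  by_cases hall : ∀ k, 0 < ((A k).trace).re
  · set c : Fin m → ℝ := fun k => (((A k).trace).re)⁻¹ with hc
    have hcpos : ∀ k, 0 < c k := fun k => inv_pos.mpr (hall k)
    set A' : (k : Fin m) → Matrix (ι k) (ι k) ℂ := fun k => ((c k : ℂ)) • A k with hA'
    have hsep : IsSep (tensorFam A') :=
      ⟨{0}, fun _ => A', fun s _ k => psd_smul (hA k) (le_of_lt (hcpos k)), by simp⟩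
    have htr : (tensorFam A').trace = 1 := by
      rw [tensorFam_trace]
      have : ∀ k, (A' k).trace = 1 := by
        intro k
        rw [hA', Matrix.trace_smul, smul_eq_mul, nonneg_trace_eq (psd_trace_nonneg (hA k))]
        rw [← Complex.ofReal_mul, inv_mul_cancel₀ (ne_of_gt (hall k))]
        simp
      simp [this]
    have hpos := hE (tensorFam A') ⟨hsep, htr⟩
    have heq : tensorFam A' = (((∏ k, c k : ℝ)) : ℂ) • tensorFam A := tensorFam_smul c A
    rw [heq, Matrix.mul_smul, Matrix.trace_smul, smul_eq_mul] at hpos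
    have hre : ((((∏ k, c k : ℝ)) : ℂ) * (E * tensorFam A).trace).re
        = (∏ k, c k) * ((E * tensorFam A).trace).re := by
      rw [Complex.mul_re]
      simp only [Complex.ofReal_re, Complex.ofReal_im, zero_mul, sub_zero]
    rw [hre] at hpos
    have hprodpos : 0 < ∏ k, c k := Finset.prod_pos fun k _ => hcpos k
    exact (mul_nonneg_iff_of_pos_left hprodpos).mp hpos
  · push_neg at hall
    obtain ⟨k0, hk0⟩ := hall
    have h0 : (A k0).trace = 0 := by
      have := psd_trace_nonneg (hA k0)
      have h1 := (Complex.nonneg_iff.mp this).1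
      rw [nonneg_trace_eq this]
      have : ((A k0).trace).re = 0 := le_antisymm hk0 h1
      simp [this]
    have : tensorFam A = 0 := tensorFam_eq_zero (psd_eq_zero_of_trace (hA k0) h0)
    rw [this]
    simp

lemma blockPos_sep_nonneg {E N : Matrix ((k : Fin m) → ι k) ((k : Fin m) → ι k) ℂ}
    (hE : IsBlockPos E) (hN : IsSep N) : 0 ≤ ((E * N).trace).re := by
  obtain ⟨S, A, hA, rfl⟩ := hN
  rw [Finset.mul_sum, Matrix.trace_sum, Complex.re_sum]
  exact Finset.sum_nonneg fun s hs => blockPos_tensor_nonneg hE (hA s hs)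

end tensor

section step
variable {L m : ℕ} {ι : Fin L → Fin m → Type*} [∀ l k, Fintype (ι l k)]

lemma stepTensor_mul (A B : (l : Fin L) → Matrix ((k : Fin m) → ι l k) ((k : Fin m) → ι l k) ℂ) :
    stepTensor A * stepTensor B = stepTensor (fun l => A l * B l) := by
  ext i j
  simp only [stepTensor, Matrix.mul_apply, Matrix.of_apply]
  calc ∑ x : (k : Fin m) → (l : Fin L) → ι l k,
        (∏ l, A l (fun k => i k l) (fun k => x k l)) * ∏ l, B l (fun k => x k l) (fun k => j k l)
      = ∑ x : (k : Fin m) → (l : Fin L) → ι l k,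
          ∏ l, (A l (fun k => i k l) (fun k => x k l) * B l (fun k => x k l) (fun k => j k l)) :=
        Finset.sum_congr rfl fun x _ => (Finset.prod_mul_distrib).symm
    _ = ∏ l, ∑ y : (k : Fin m) → ι l k, A l (fun k => i k l) y * B l y (fun k => j k l) :=
        sum_prod_grouped (fun l y => A l (fun k => i k l) y * B l y (fun k => j k l))
    _ = ∏ l, (A l * B l) (fun k => i k l) (fun k => j k l) :=
        Finset.prod_congr rfl fun l _ => (Matrix.mul_apply).symm

lemma stepTensor_trace (A : (l : Fin L) → Matrix ((k : Fin m) → ι l k) ((k : Fin m) → ι l k) ℂ) :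
    (stepTensor A).trace = ∏ l, (A l).trace := by
  rw [Matrix.trace]
  simp only [Matrix.diag_apply, stepTensor, Matrix.of_apply]
  exact sum_prod_grouped (fun l y => A l y y)

lemma stepTensor_one [∀ l k, DecidableEq (ι l k)] :
    stepTensor (ι := ι) (fun _ => 1) = 1 := by
  ext i j
  by_cases h : i = j
  · subst h
    simp [stepTensor, Matrix.one_apply]
  · simp only [stepTensor, Matrix.of_apply, Matrix.one_apply, h, if_false]
    have hex : ∃ l, (fun k => i k l) ≠ (fun k => j k l) := by
      by_contra hc
      push_neg at hc
      exact h (funext fun k => funext fun l => congrFun (hc l) k)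
    obtain ⟨l0, hl0⟩ := hex
    exact Finset.prod_eq_zero (Finset.mem_univ l0) (by simp [Matrix.one_apply, hl0])

lemma sum_stepTensor {n : Fin L → ℕ}
    (M : (l : Fin L) → Fin (n l) → Matrix ((k : Fin m) → ι l k) ((k : Fin m) → ι l k) ℂ) :
    ∑ c : (l : Fin L) → Fin (n l), stepTensor (fun l => M l (c l))
      = stepTensor (fun l => ∑ i, M l i) := by
  ext i j
  simp only [Matrix.sum_apply, stepTensor, Matrix.of_apply]
  rw [sum_prod_pi (fun l (y : Fin (n l)) => M l y (fun k => i k l) (fun k => j k l))]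

lemma succProb_stepTensor {n : Fin L → ℕ} (η : (l : Fin L) → Fin (n l) → ℝ)
    (ρ Q : (l : Fin L) → Fin (n l) → Matrix ((k : Fin m) → ι l k) ((k : Fin m) → ι l k) ℂ)
    [∀ l k, DecidableEq (ι l k)]
    (hρ : ∀ l i, (ρ l i).PosSemidef) (hQ : ∀ l i, (Q l i).PosSemidef) :
    succProb (fun c : (l : Fin L) → Fin (n l) => ∏ l, η l (c l))
      (fun c => stepTensor (fun l => ρ l (c l))) (fun c => stepTensor (fun l => Q l (c l)))
      = ∏ l, succProb (η l) (ρ l) (Q l) := by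
  have key : ∀ l i, (ρ l i * Q l i).trace = ((((ρ l i * Q l i).trace).re : ℝ) : ℂ) :=
    fun l i => nonneg_trace_eq (psd_trace_mul_nonneg (hρ l i) (hQ l i))
  unfold succProb
  have h1 : ∀ c : (l : Fin L) → Fin (n l),
      ((stepTensor (fun l => ρ l (c l)) * stepTensor (fun l => Q l (c l))).trace).re
      = ∏ l, ((ρ l (c l) * Q l (c l)).trace).re := by
    intro c
    rw [stepTensor_mul, stepTensor_trace]
    have : ∏ l, (ρ l (c l) * Q l (c l)).trace
        = (((∏ l, ((ρ l (c l) * Q l (c l)).trace).re : ℝ)) : ℂ) := by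
      rw [Complex.ofReal_prod]
      exact Finset.prod_congr rfl fun l _ => key l (c l)
    rw [this, Complex.ofReal_re]
  calc ∑ c : (l : Fin L) → Fin (n l), (∏ l, η l (c l)) *
        ((stepTensor (fun l => ρ l (c l)) * stepTensor (fun l => Q l (c l))).trace).re
      = ∑ c : (l : Fin L) → Fin (n l), ∏ l, (η l (c l) * ((ρ l (c l) * Q l (c l)).trace).re) := by
        refine Finset.sum_congr rfl fun c _ => ?_
        rw [h1 c, ← Finset.prod_mul_distrib]
    _ = ∏ l, ∑ i, η l i * ((ρ l i * Q l i).trace).re :=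
        sum_prod_pi (fun l i => η l i * ((ρ l i * Q l i).trace).re)

lemma succProb_trivial {nn : ℕ} {N : Type*} [Fintype N] [DecidableEq N]
    (η : Fin nn → ℝ) (ρ : Fin nn → Matrix N N ℂ) (htr : ∀ i, (ρ i).trace = 1) (y : Fin nn) :
    succProb η ρ (fun i => if i = y then (1 : Matrix N N ℂ) else 0) = η y := by
  unfold succProb
  rw [Finset.sum_eq_single y]
  · simp [htr y]
  · intro i _ hi
    simp [hi]
  · intro h
    exact absurd (Finset.mem_univ y) h

end step
/-- if there are LOCC measurements {M_i^l} and a Hermitian H such that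
H − η_cρ_c is block positive and Tr[M_c(H − η_cρ_c)] = 0 for all sequences c, then
Π_l p_L(E^l) = p_L(⊗E^l) = p_SEP(⊗E^l). -/
theorem factorizable_of_duality_certificate {L m : ℕ} {ι : Fin L → Fin m → Type*}
    [∀ l k, Fintype (ι l k)] [∀ l k, DecidableEq (ι l k)]
    {n : Fin L → ℕ}
    (η : (l : Fin L) → Fin (n l) → ℝ)
    (ρ : (l : Fin L) → Fin (n l) → Matrix ((k : Fin m) → ι l k) ((k : Fin m) → ι l k) ℂ)
    (hη : ∀ l i, 0 < η l i) (hsum : ∀ l, ∑ i, η l i = 1)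
    (hρ : ∀ l i, (ρ l i).PosSemidef ∧ (ρ l i).trace = 1)
    -- per-step LOCC measurement classes (separable POVMs containing trivial guesses)
    (C : (l : Fin L) → Set (Fin (n l) → Matrix ((k : Fin m) → ι l k) ((k : Fin m) → ι l k) ℂ))
    (hC : ∀ l, ∀ M ∈ C l, IsPOVM M ∧ ∀ i, IsSep (M i))
    (htriv : ∀ l, ∀ y : Fin (n l),
      (fun i => if i = y then (1 : Matrix ((k : Fin m) → ι l k) ((k : Fin m) → ι l k) ℂ) else 0) ∈ C l)
    -- LOCC measurement class on the sequence space
    (Cp : Set (((l : Fin L) → Fin (n l)) →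
      Matrix ((k : Fin m) → (l : Fin L) → ι l k) ((k : Fin m) → (l : Fin L) → ι l k) ℂ))
    (hCp : ∀ M ∈ Cp, IsPOVM M ∧ ∀ c, IsSep (ι := fun k => (l : Fin L) → ι l k) (M c))
    (hclosed : ∀ M : (l : Fin L) → Fin (n l) → Matrix ((k : Fin m) → ι l k) ((k : Fin m) → ι l k) ℂ,
      (∀ l, M l ∈ C l) → (fun c => stepTensor (fun l => M l (c l))) ∈ Cp)
    (pL : Fin L → ℝ) (hpL : ∀ l, IsLUB ((fun M => succProb (η l) (ρ l) M) '' C l) (pL l))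
    (pLtot : ℝ)
    (hpLtot : IsLUB ((fun M => succProb (fun c : (l : Fin L) → Fin (n l) => ∏ l, η l (c l))
      (fun c => stepTensor (fun l => ρ l (c l))) M) '' Cp) pLtot)
    (pSEPtot : ℝ)
    (hpSEPtot : IsLUB ((fun M => succProb (fun c : (l : Fin L) → Fin (n l) => ∏ l, η l (c l))
      (fun c => stepTensor (fun l => ρ l (c l))) M) ''
      {M | IsPOVM M ∧ ∀ c, IsSep (ι := fun k => (l : Fin L) → ι l k) (M c)}) pSEPtot)
    -- the duality certificate: LOCC measurements M^l and a Hermitian H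
    (M : (l : Fin L) → Fin (n l) → Matrix ((k : Fin m) → ι l k) ((k : Fin m) → ι l k) ℂ)
    (hM : ∀ l, M l ∈ C l)
    (H : Matrix ((k : Fin m) → (l : Fin L) → ι l k) ((k : Fin m) → (l : Fin L) → ι l k) ℂ)
    (hHerm : H.IsHermitian)
    (hH1 : ∀ c : (l : Fin L) → Fin (n l),
      IsBlockPos (ι := fun k => (l : Fin L) → ι l k)
        (H - ((∏ l, η l (c l) : ℝ) : ℂ) • stepTensor (fun l => ρ l (c l))))
    (hH2 : ∀ c : (l : Fin L) → Fin (n l),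
      ((stepTensor (fun l => M l (c l)) *
        (H - ((∏ l, η l (c l) : ℝ) : ℂ) • stepTensor (fun l => ρ l (c l)))).trace) = 0) :
    (∏ l, pL l) = pLtot ∧ pLtot = pSEPtot := by
  classical
  set T : ℝ := (H.trace).re with hT
  have hMpovm : ∀ l, IsPOVM (M l) := fun l => (hC l (M l) (hM l)).1
  have hρpsd : ∀ l i, (ρ l i).PosSemidef := fun l i => (hρ l i).1
  -- upper bound for all separable POVMs on the sequence space
  have sep_upper : ∀ N, IsPOVM N → (∀ c, IsSep (ι := fun k => (l : Fin L) → ι l k) (N c)) →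
      succProb (fun c : (l : Fin L) → Fin (n l) => ∏ l, η l (c l))
        (fun c => stepTensor (fun l => ρ l (c l))) N ≤ T := by
    intro N hNpovm hNsep
    unfold succProb
    have hterm : ∀ c : (l : Fin L) → Fin (n l),
        (∏ l, η l (c l)) * ((stepTensor (fun l => ρ l (c l)) * N c).trace).re
          ≤ ((N c * H).trace).re := by
      intro c
      have hexp : (N c * (H - ((∏ l, η l (c l) : ℝ) : ℂ) • stepTensor (fun l => ρ l (c l)))).trace
          = (N c * H).trace
            - ((∏ l, η l (c l) : ℝ) : ℂ) * (N c * stepTensor (fun l => ρ l (c l))).trace := by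
        rw [Matrix.mul_sub, Matrix.trace_sub, Matrix.mul_smul, Matrix.trace_smul, smul_eq_mul]
      have hbp : 0 ≤ ((N c *
          (H - ((∏ l, η l (c l) : ℝ) : ℂ) • stepTensor (fun l => ρ l (c l)))).trace).re := by
        rw [Matrix.trace_mul_comm]
        exact blockPos_sep_nonneg (hH1 c) (hNsep c)
      rw [hexp, Complex.sub_re] at hbp
      have hre : (((∏ l, η l (c l) : ℝ) : ℂ) * (N c * stepTensor (fun l => ρ l (c l))).trace).re
          = (∏ l, η l (c l)) * ((N c * stepTensor (fun l => ρ l (c l))).trace).re := by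
        rw [Complex.mul_re]
        simp only [Complex.ofReal_re, Complex.ofReal_im, zero_mul, sub_zero]
      rw [hre] at hbp
      rw [Matrix.trace_mul_comm]
      linarith
    have hsum2 : ∑ c : (l : Fin L) → Fin (n l), ((N c * H).trace).re = T := by
      rw [← Complex.re_sum, ← Matrix.trace_sum, ← Matrix.sum_mul, hNpovm.2, Matrix.one_mul]
    calc ∑ c : (l : Fin L) → Fin (n l),
          (∏ l, η l (c l)) * ((stepTensor (fun l => ρ l (c l)) * N c).trace).re
        ≤ ∑ c : (l : Fin L) → Fin (n l), ((N c * H).trace).re :=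
          Finset.sum_le_sum fun c _ => hterm c
      _ = T := hsum2
  -- the certificate measurement achieves T
  have value_eq : succProb (fun c : (l : Fin L) → Fin (n l) => ∏ l, η l (c l))
      (fun c => stepTensor (fun l => ρ l (c l)))
      (fun c => stepTensor (fun l => M l (c l))) = T := by
    unfold succProb
    have hterm : ∀ c : (l : Fin L) → Fin (n l),
        (∏ l, η l (c l)) *
          ((stepTensor (fun l => ρ l (c l)) * stepTensor (fun l => M l (c l))).trace).re
          = ((stepTensor (fun l => M l (c l)) * H).trace).re := by
      intro c
      have h2 := hH2 c
      rw [Matrix.mul_sub, Matrix.trace_sub, Matrix.mul_smul, Matrix.trace_smul, smul_eq_mul,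
        sub_eq_zero] at h2
      have h3 : ((stepTensor (fun l => M l (c l)) * H).trace).re
          = (∏ l, η l (c l)) *
            ((stepTensor (fun l => M l (c l)) * stepTensor (fun l => ρ l (c l))).trace).re := by
        rw [h2, Complex.mul_re]
        simp only [Complex.ofReal_re, Complex.ofReal_im, zero_mul, sub_zero]
      rw [h3, Matrix.trace_mul_comm]
    calc ∑ c : (l : Fin L) → Fin (n l), (∏ l, η l (c l)) *
          ((stepTensor (fun l => ρ l (c l)) * stepTensor (fun l => M l (c l))).trace).re
        = ∑ c : (l : Fin L) → Fin (n l), ((stepTensor (fun l => M l (c l)) * H).trace).re :=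
          Finset.sum_congr rfl fun c _ => hterm c
      _ = T := by
        rw [← Complex.re_sum, ← Matrix.trace_sum, ← Matrix.sum_mul, sum_stepTensor]
        have h1 : (fun l => ∑ i, M l i)
            = (fun l : Fin L => (1 : Matrix ((k : Fin m) → ι l k) ((k : Fin m) → ι l k) ℂ)) :=
          funext fun l => (hMpovm l).2
        rw [h1, stepTensor_one, Matrix.one_mul]
  -- product of local success probabilities is bounded by T
  have himage : ∀ Q : (l : Fin L) → Fin (n l) →
      Matrix ((k : Fin m) → ι l k) ((k : Fin m) → ι l k) ℂ, (∀ l, Q l ∈ C l) →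
      (∏ l, succProb (η l) (ρ l) (Q l)) ≤ T := by
    intro Q hQ
    have hQpovm := fun l => (hC l (Q l) (hQ l)).1
    have hmem := hclosed Q hQ
    have hb := sep_upper _ (hCp _ hmem).1 (hCp _ hmem).2
    rwa [succProb_stepTensor η ρ Q hρpsd (fun l i => (hQpovm l).1 i)] at hb
  have hT_le : T ≤ pLtot := hpLtot.1 ⟨_, hclosed M hM, value_eq⟩
  have h12 : pLtot ≤ pSEPtot := by
    apply hpLtot.2
    rintro x ⟨N, hN, rfl⟩
    exact hpSEPtot.1 ⟨N, ⟨(hCp N hN).1, (hCp N hN).2⟩, rfl⟩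
  have h23 : pSEPtot ≤ T := by
    apply hpSEPtot.2
    rintro x ⟨N, hN, rfl⟩
    exact sep_upper N hN.1 hN.2
  have hpLtotT : pLtot = T := le_antisymm (le_trans h12 h23) hT_le
  have hpSEPT : pSEPtot = T := le_antisymm h23 (le_trans hT_le h12)
  set s : Fin L → ℝ := fun l => succProb (η l) (ρ l) (M l) with hs
  have hTs : T = ∏ l, s l := by
    rw [← value_eq, succProb_stepTensor η ρ M hρpsd (fun l i => (hMpovm l).1 i)]
  have hne : ∀ l, 0 < n l := by
    intro l
    by_contra h
    push_neg at h
    have h0 : n l = 0 := Nat.le_zero.mp h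
    have hie : IsEmpty (Fin (n l)) := by rw [h0]; infer_instance
    have h1 := hsum l
    rw [@Finset.univ_eq_empty _ _ hie, Finset.sum_empty] at h1
    exact absurd h1 (by norm_num)
  have hTpos : 0 < T := by
    set Q : (l : Fin L) → Fin (n l) →
        Matrix ((k : Fin m) → ι l k) ((k : Fin m) → ι l k) ℂ :=
      fun l => (fun i => if i = ⟨0, hne l⟩ then 1 else 0) with hQdef
    have hQmem : ∀ l, Q l ∈ C l := fun l => htriv l ⟨0, hne l⟩
    have hmem := hclosed Q hQmem
    have h3 : succProb (fun c : (l : Fin L) → Fin (n l) => ∏ l, η l (c l))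
        (fun c => stepTensor (fun l => ρ l (c l)))
        (fun c => stepTensor (fun l => Q l (c l))) ≤ pLtot :=
      hpLtot.1 ⟨_, hmem, rfl⟩
    rw [succProb_stepTensor η ρ Q hρpsd (fun l i => ((hC l (Q l) (hQmem l)).1).1 i)] at h3
    have h2 : (∏ l, succProb (η l) (ρ l) (Q l)) = ∏ l, η l ⟨0, hne l⟩ :=
      Finset.prod_congr rfl fun l _ =>
        succProb_trivial (η l) (ρ l) (fun i => (hρ l i).2) _
    rw [h2] at h3
    have h4 : 0 < ∏ l, η l ⟨0, hne l⟩ := Finset.prod_pos fun l _ => hη l _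
    rw [hpLtotT] at h3
    linarith
  have hs_nonneg : ∀ l, 0 ≤ s l := by
    intro l
    refine Finset.sum_nonneg fun i _ => mul_nonneg (le_of_lt (hη l i)) ?_
    exact (Complex.nonneg_iff.mp (psd_trace_mul_nonneg (hρpsd l i) ((hMpovm l).1 i))).1
  have hs_pos : ∀ l, 0 < s l := by
    intro l
    rcases lt_or_eq_of_le (hs_nonneg l) with h | h
    · exact h
    · exfalso
      have h0 : (∏ l, s l) = 0 := Finset.prod_eq_zero (Finset.mem_univ l) h.symm
      rw [← hTs] at h0
      exact absurd h0 (ne_of_gt hTpos)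
  have hpL_eq : ∀ l, pL l = s l := by
    intro l0
    have hub : ∀ x ∈ (fun M => succProb (η l0) (ρ l0) M) '' C l0, x ≤ s l0 := by
      rintro x ⟨N, hN, rfl⟩
      set Q := Function.update M l0 N with hQ
      have hQmem : ∀ l, Q l ∈ C l := by
        intro l
        by_cases h : l = l0
        · subst h; rw [hQ, Function.update_self]; exact hN
        · rw [hQ, Function.update_of_ne h]; exact hM l
      have hb := himage Q hQmem
      have hsplit : (∏ l, succProb (η l) (ρ l) (Q l))
          = succProb (η l0) (ρ l0) N * ∏ l ∈ Finset.univ.erase l0, s l := by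
        rw [← Finset.mul_prod_erase Finset.univ _ (Finset.mem_univ l0)]
        congr 1
        · rw [hQ, Function.update_self]
        · refine Finset.prod_congr rfl fun l hl => ?_
          rw [hQ, Function.update_of_ne (Finset.ne_of_mem_erase hl)]
      have hsplit2 : (∏ l, s l) = s l0 * ∏ l ∈ Finset.univ.erase l0, s l :=
        (Finset.mul_prod_erase Finset.univ _ (Finset.mem_univ l0)).symm
      have hPpos : 0 < ∏ l ∈ Finset.univ.erase l0, s l :=
        Finset.prod_pos fun l _ => hs_pos l
      rw [hsplit] at hb
      rw [hTs, hsplit2] at hb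
      exact le_of_mul_le_mul_right hb hPpos
    exact le_antisymm ((hpL l0).2 hub) ((hpL l0).1 ⟨M l0, hM l0, rfl⟩)
  constructor
  · rw [hpLtotT, hTs]
    exact Finset.prod_congr rfl fun l _ => hpL_eq l
  · rw [hpLtotT, hpSEPT]
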